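/- Let c ∈ ℝ₊^d satisfy: for every μ' ∈ B(μ), ∑_{i∈[d]} 2cᵢ(μᵢ−μᵢ')² ≥ 1, where μ has exactly s positive components μ₁ ≥ … ≥ μ_s > 0 = μ_{s+1} = … = μ_d and B(μ) = {μ' with exactly s positive components, μ'₁=μ₁, max μ' > max μ}. Then for every i ∈ {2,…,s} and every j ∈ {s+1,…,d}, cᵢμᵢ² + c_jμ₁² ≥ 1/2. -/

import Mathlib

open Finset

/-- If `c ∈ ℝ₊^d` satisfies the change-of-measure constraints
`∑ 2cᵢ(μᵢ − μ'ᵢ)² ≥ 1` for every `μ' ∈ B(μ)` (alternative vectors with exactly `s`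
positive components, same first component, and a larger maximum), then
`cᵢμᵢ² + c_jμ₁² ≥ 1/2` for every `i ∈ {2,…,s}` and `j ∈ {s+1,…,d}`. -/
theorem constraint_set_second_condition
    (d s : ℕ) (μ c : ℕ → ℝ) (hs : 2 ≤ s) (hsd : s ≤ d)
    (hsorted : ∀ i j, 1 ≤ i → i ≤ j → j ≤ s → μ j ≤ μ i)
    (hpos : 0 < μ s)
    (hzero : ∀ j, s < j → j ≤ d → μ j = 0)
    (hc : ∀ i, 0 ≤ c i)
    (hC : ∀ μ' : ℕ → ℝ,
      ((Icc 1 d).filter (fun i => 0 < μ' i)).card = s →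
      μ' 1 = μ 1 →
      ((Icc 1 d).sup' (Finset.nonempty_Icc.2 (le_trans (le_trans one_le_two hs) hsd)) μ
        < (Icc 1 d).sup' (Finset.nonempty_Icc.2 (le_trans (le_trans one_le_two hs) hsd)) μ') →
      1 ≤ ∑ i ∈ Icc 1 d, 2 * c i * (μ i - μ' i) ^ 2) :
    ∀ i ∈ Icc 2 s, ∀ j ∈ Icc (s + 1) d, c i * (μ i) ^ 2 + c j * (μ 1) ^ 2 ≥ 1 / 2 := by
  intro i hi j hj
  rw [Finset.mem_Icc] at hi hj
  obtain ⟨hi2, his⟩ := hi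
  obtain ⟨hjs, hjd⟩ := hj
  have hij : i ≠ j := by omega
  have hμ1 : 0 < μ 1 := lt_of_lt_of_le hpos (hsorted 1 s le_rfl (by omega) le_rfl)
  have hμi : 0 < μ i := lt_of_lt_of_le hpos (hsorted i s (by omega) his le_rfl)
  have hμj : μ j = 0 := hzero j (by omega) hjd
  -- key step: for every γ > 0 the constraint gives a bound
  have key : ∀ γ : ℝ, 0 < γ → 1 ≤ 2 * c i * μ i ^ 2 + 2 * c j * (μ 1 + γ) ^ 2 := by
    intro γ hγ
    set μ' : ℕ → ℝ := fun k => if k = i then 0 else if k = j then μ 1 + γ else μ k with hμ'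
    have hμ'i : μ' i = 0 := by simp [hμ']
    have hμ'j : μ' j = μ 1 + γ := by simp [hμ', hij.symm]
    have hμ'other : ∀ k, k ≠ i → k ≠ j → μ' k = μ k := by
      intro k hki hkj; simp [hμ', hki, hkj]
    have hμ'1 : μ' 1 = μ 1 := hμ'other 1 (by omega) (by omega)
    -- positive components of μ'
    have hfilt : (Icc 1 d).filter (fun k => 0 < μ' k) = insert j ((Icc 1 s).erase i) := by
      ext k
      simp only [Finset.mem_filter, Finset.mem_Icc, Finset.mem_insert, Finset.mem_erase]
      constructor
      · rintro ⟨⟨hk1, hkd⟩, hkpos⟩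
        by_cases hkj : k = j
        · exact Or.inl hkj
        · right
          by_cases hki : k = i
          · exfalso; rw [hki, hμ'i] at hkpos; exact lt_irrefl 0 hkpos
          · rw [hμ'other k hki hkj] at hkpos
            refine ⟨hki, hk1, ?_⟩
            by_contra h
            rw [hzero k (by omega) hkd] at hkpos
            exact lt_irrefl 0 hkpos
      · rintro (rfl | ⟨hki, hk1, hks⟩)
        · exact ⟨⟨by omega, hjd⟩, by rw [hμ'j]; positivity⟩
        · refine ⟨⟨hk1, by omega⟩, ?_⟩
          rw [hμ'other k hki (by omega)]
          exact lt_of_lt_of_le hpos (hsorted k s hk1 hks le_rfl)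
    have hcard : ((Icc 1 d).filter (fun k => 0 < μ' k)).card = s := by
      rw [hfilt, Finset.card_insert_of_notMem (by simp; omega),
        Finset.card_erase_of_mem (by simp; omega)]
      simp [Nat.card_Icc]
      omega
    -- sup condition
    have hsup : ((Icc 1 d).sup' (Finset.nonempty_Icc.2 (le_trans (le_trans one_le_two hs) hsd)) μ
        < (Icc 1 d).sup' (Finset.nonempty_Icc.2 (le_trans (le_trans one_le_two hs) hsd)) μ') := by
      have hne : (Icc 1 d).Nonempty := Finset.nonempty_Icc.2 (le_trans (le_trans one_le_two hs) hsd)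
      have h1 : (Icc 1 d).sup' hne μ ≤ μ 1 := by
        apply Finset.sup'_le
        intro k hk
        rw [Finset.mem_Icc] at hk
        by_cases hks : k ≤ s
        · exact hsorted 1 k le_rfl hk.1 hks
        · rw [hzero k (by omega) hk.2]; linarith
      have h2 : μ 1 + γ ≤ (Icc 1 d).sup' hne μ' := by
        rw [← hμ'j]
        exact Finset.le_sup' μ' (Finset.mem_Icc.2 ⟨by omega, hjd⟩)
      calc (Icc 1 d).sup' hne μ ≤ μ 1 := h1
        _ < μ 1 + γ := by linarith
        _ ≤ _ := h2
    have := hC μ' hcard hμ'1 hsup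
    have hsum : ∑ k ∈ Icc 1 d, 2 * c k * (μ k - μ' k) ^ 2
        = 2 * c i * μ i ^ 2 + 2 * c j * (μ 1 + γ) ^ 2 := by
      rw [Finset.sum_eq_add_of_mem i j (Finset.mem_Icc.2 ⟨by omega, by omega⟩)
        (Finset.mem_Icc.2 ⟨by omega, hjd⟩) hij ?_]
      · rw [hμ'i, hμ'j, hμj]; ring
      · intro k _ ⟨hki, hkj⟩
        rw [hμ'other k hki hkj]
        simp
    linarith [hsum ▸ this]
  -- take γ → 0⁺
  have hlim : Filter.Tendsto (fun γ : ℝ => 2 * c i * μ i ^ 2 + 2 * c j * (μ 1 + γ) ^ 2)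
      (nhdsWithin 0 (Set.Ioi 0)) (nhds (2 * c i * μ i ^ 2 + 2 * c j * (μ 1 + 0) ^ 2)) := by
    apply Filter.Tendsto.mono_left _ nhdsWithin_le_nhds
    exact Continuous.tendsto (by fun_prop) 0
  have : 1 ≤ 2 * c i * μ i ^ 2 + 2 * c j * (μ 1 + 0) ^ 2 := by
    refine ge_of_tendsto hlim ?_
    filter_upwards [self_mem_nhdsWithin] with γ hγ
    exact key γ hγ
  nlinarith [this]
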